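/- Completeness of JD_CS: for every axiomatically appropriate constant specification CS for JD and every formula A, if A is not derivable in the Hilbert system JD_CS then there exists a Fitting model M for JD_CS and a world w in M such that M,w ⊮ A. -/

import Mathlib

namespace JustificationLogic

/-- Justification terms: constants, variables, application, sum, and proof checker `!`. -/
inductive Term : Type
  | const : ℕ → Term
  | var : ℕ → Term
  | app : Term → Term → Term
  | sum : Term → Term → Term
  | bang : Term → Term
  deriving DecidableEq

/-- Formulas of justification logic: atoms, negation, implication, and `t : A`. -/
inductive Formula : Type
  | atom : ℕ → Formula
  | neg : Formula → Formula
  | impl : Formula → Formula → Formula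
  | just : Term → Formula → Formula
  deriving DecidableEq

/-- Disjunction, defined classically: `A ∨ B := ¬A → B`. -/
def Formula.or (A B : Formula) : Formula := (Formula.neg A).impl B

/-- Falsum, defined as the negation of a propositional tautology. -/
def Formula.falsum : Formula := Formula.neg ((Formula.atom 0).impl (Formula.atom 0))

/-- Number of symbols of a term. -/
def Term.size : Term → ℕ
  | .const _ => 1
  | .var _ => 1
  | .app s t => s.size + t.size + 1
  | .sum s t => s.size + t.size + 1
  | .bang t => t.size + 1

/-- Number of symbols of a formula. -/
def Formula.size : Formula → ℕ
  | .atom _ => 1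
  | .neg A => A.size + 1
  | .impl A B => A.size + B.size + 1
  | .just t A => t.size + A.size + 1

/-- An explicit numerical code for terms (an injective Gödel numbering). -/
def Term.code : Term → ℕ
  | .const n => Nat.pair 0 n
  | .var n => Nat.pair 1 n
  | .app s t => Nat.pair 2 (Nat.pair s.code t.code)
  | .sum s t => Nat.pair 3 (Nat.pair s.code t.code)
  | .bang t => Nat.pair 4 t.code

/-- An explicit numerical code for formulas (an injective Gödel numbering). -/
def Formula.code : Formula → ℕ
  | .atom n => Nat.pair 0 n
  | .neg A => Nat.pair 1 A.code
  | .impl A B => Nat.pair 2 (Nat.pair A.code B.code)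
  | .just t A => Nat.pair 3 (Nat.pair t.code A.code)

/-- Substitution of terms for term variables. -/
def Term.subst (σ : ℕ → Term) : Term → Term
  | .const n => .const n
  | .var n => σ n
  | .app s t => .app (s.subst σ) (t.subst σ)
  | .sum s t => .sum (s.subst σ) (t.subst σ)
  | .bang t => .bang (t.subst σ)

/-- Simultaneous substitution of terms for term variables and formulas for atoms. -/
def Formula.subst (σ : ℕ → Term) (τ : ℕ → Formula) : Formula → Formula
  | .atom n => τ n
  | .neg A => .neg (A.subst σ τ)
  | .impl A B => .impl (A.subst σ τ) (B.subst σ τ)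
  | .just t A => .just (t.subst σ) (A.subst σ τ)

/-- `towerT c n = !ⁿc`. -/
def towerT (c : Term) : ℕ → Term
  | 0 => c
  | n + 1 => Term.bang (towerT c n)

/-- `towerF c A n = !ⁿ⁻¹c : ⋯ : !c : c : A` (and `A` for `n = 0`), so that
`(towerT c n) : (towerF c A n)` is the `n`-th formula produced by the rule (AN!). -/
def towerF (c : Term) (A : Formula) : ℕ → Formula
  | 0 => A
  | n + 1 => Formula.just (towerT c n) (towerF c A n)

/-- The axioms of the justification logics considered, with switches `hd`, `ht`, `h4`
for the axioms (jd), (jt), (j4).  The propositional part (A1) is given by three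
standard Hilbert-style schemes axiomatizing classical propositional logic. -/
inductive Ax (hd ht h4 : Bool) : Formula → Prop
  | k (A B : Formula) : Ax hd ht h4 (A.impl (B.impl A))
  | s (A B C : Formula) :
      Ax hd ht h4 ((A.impl (B.impl C)).impl ((A.impl B).impl (A.impl C)))
  | dn (A B : Formula) :
      Ax hd ht h4 (((A.neg).impl (B.neg)).impl (B.impl A))
  | a2 (t s : Term) (A B : Formula) :
      Ax hd ht h4 ((Formula.just t (A.impl B)).impl
        ((Formula.just s A).impl (Formula.just (Term.app t s) B)))
  | a3 (t s : Term) (A : Formula) :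
      Ax hd ht h4 (((Formula.just t A).or (Formula.just s A)).impl
        (Formula.just (Term.sum t s) A))
  | jd (t : Term) : hd = true →
      Ax hd ht h4 ((Formula.just t Formula.falsum).impl Formula.falsum)
  | jt (t : Term) (A : Formula) : ht = true →
      Ax hd ht h4 ((Formula.just t A).impl A)
  | j4 (t : Term) (A : Formula) : h4 = true →
      Ax hd ht h4 ((Formula.just t A).impl
        (Formula.just (Term.bang t) (Formula.just t A)))

/-- Axioms of the respective logics. -/
def AxJ : Formula → Prop := Ax false false false
def AxJT : Formula → Prop := Ax false true false
def AxJD : Formula → Prop := Ax true false false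
def AxJ4 : Formula → Prop := Ax false false true
def AxJD4 : Formula → Prop := Ax true false true
def AxLP : Formula → Prop := Ax false true true

/-- `CS` is a constant specification for the logic with axioms `Axm`:
every member of `CS` is of the form `c : A` with `c` a constant and `A` an axiom. -/
def ConstSpec (Axm : Formula → Prop) (CS : Set Formula) : Prop :=
  ∀ F ∈ CS, ∃ (c : ℕ) (A : Formula), F = Formula.just (Term.const c) A ∧ Axm A

/-- `CS` is axiomatically appropriate for axioms `Axm`:
for every axiom `A` there is a constant `c` with `c : A ∈ CS`. -/
def AxApprop (Axm : Formula → Prop) (CS : Set Formula) : Prop :=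
  ∀ A : Formula, Axm A → ∃ c : ℕ, Formula.just (Term.const c) A ∈ CS

/-- `CS` is schematic: the set of axioms justified by a given constant consists of
axiom schemes, i.e. it is closed under simultaneous substitution of terms for term
variables and formulas for atomic propositions. -/
def Schematic (CS : Set Formula) : Prop :=
  ∀ (c : ℕ) (A : Formula), Formula.just (Term.const c) A ∈ CS →
    ∀ (σ : ℕ → Term) (τ : ℕ → Formula),
      Formula.just (Term.const c) (A.subst σ τ) ∈ CS

/-- `CS` is decidable: some computable function decides membership in `CS`
(via the explicit Gödel numbering of formulas). -/
def DecidableCS (CS : Set Formula) : Prop :=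
  ∃ C : ℕ → Bool, Computable C ∧ ∀ F : Formula, F ∈ CS ↔ C F.code = true

/-- Hilbert-style derivability with the iterated axiom necessitation rule (AN!):
from `c : A ∈ CS` infer `!ⁿc : !ⁿ⁻¹c : ⋯ : !c : c : A` for every `n ≥ 0`. -/
inductive DerivB (Axm : Formula → Prop) (CS : Set Formula) : Formula → Prop
  | ax {A : Formula} : Axm A → DerivB Axm CS A
  | mp {A B : Formula} : DerivB Axm CS (A.impl B) → DerivB Axm CS A → DerivB Axm CS B
  | an (c : ℕ) (A : Formula) (n : ℕ) :
      Formula.just (Term.const c) A ∈ CS →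
      DerivB Axm CS (Formula.just (towerT (Term.const c) n) (towerF (Term.const c) A n))

/-- Hilbert-style derivability with the simple axiom necessitation rule (AN):
from `c : A ∈ CS` infer `c : A`. -/
inductive DerivS (Axm : Formula → Prop) (CS : Set Formula) : Formula → Prop
  | ax {A : Formula} : Axm A → DerivS Axm CS A
  | mp {A B : Formula} : DerivS Axm CS (A.impl B) → DerivS Axm CS A → DerivS Axm CS B
  | an (c : ℕ) (A : Formula) :
      Formula.just (Term.const c) A ∈ CS →
      DerivS Axm CS (Formula.just (Term.const c) A)

/-- A structure for Fitting models: a nonempty set of worlds, an accessibility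
relation, an evidence relation and a valuation. -/
structure Model : Type 1 where
  World : Type
  nonempty : Nonempty World
  R : World → World → Prop
  E : Term → Formula → World → Prop
  val : ℕ → World → Prop

/-- The satisfaction relation `M, w ⊩ A`. -/
def Sat (M : Model) : Formula → M.World → Prop
  | .atom n, w => M.val n w
  | .neg A, w => ¬ Sat M A w
  | .impl A B, w => Sat M A w → Sat M B w
  | .just t A, w => M.E t A w ∧ ∀ v : M.World, M.R w v → Sat M A v

/-- The evidence relation of a model, as a set of triples. -/
def EvSet (M : Model) : Set (Term × Formula × M.World) :=
  {x | M.E x.1 x.2.1 x.2.2}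

/-- The graph of the valuation: the set `{(w, p) | w ∈ ν(p)}`. -/
def ValSet (M : Model) : Set (M.World × ℕ) :=
  {p | M.val p.2 p.1}

/-- Seriality of a relation: every world has a successor. -/
def Serial {W : Type} (R : W → W → Prop) : Prop := ∀ w : W, ∃ v : W, R w v

/-- Admissible evidence relation for the logics without the (j4) axiom:
closure under sum and application, and the constant specification condition
with iterated `!`. -/
def AdmissibleBang (CS : Set Formula) {W : Type}
    (E : Set (Term × Formula × W)) : Prop :=
  (∀ (s t : Term) (A : Formula) (w : W),
      ((s, A, w) ∈ E ∨ (t, A, w) ∈ E) → (Term.sum s t, A, w) ∈ E) ∧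
  (∀ (s t : Term) (A B : Formula) (w : W),
      (s, A.impl B, w) ∈ E → (t, A, w) ∈ E → (Term.app s t, B, w) ∈ E) ∧
  (∀ (c : ℕ) (A : Formula) (w : W) (n : ℕ),
      Formula.just (Term.const c) A ∈ CS →
      (towerT (Term.const c) n, towerF (Term.const c) A n, w) ∈ E)

/-- Admissible evidence relation for the logics with the (j4) axiom:
closure under sum and application, the simple constant specification condition,
closure under `!`, and monotonicity along the accessibility relation. -/
def AdmissibleJ4 (CS : Set Formula) {W : Type} (R : W → W → Prop)
    (E : Set (Term × Formula × W)) : Prop :=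
  (∀ (s t : Term) (A : Formula) (w : W),
      ((s, A, w) ∈ E ∨ (t, A, w) ∈ E) → (Term.sum s t, A, w) ∈ E) ∧
  (∀ (s t : Term) (A B : Formula) (w : W),
      (s, A.impl B, w) ∈ E → (t, A, w) ∈ E → (Term.app s t, B, w) ∈ E) ∧
  (∀ (c : ℕ) (A : Formula) (w : W),
      Formula.just (Term.const c) A ∈ CS → (Term.const c, A, w) ∈ E) ∧
  (∀ (t : Term) (A : Formula) (w : W),
      (t, A, w) ∈ E → (Term.bang t, Formula.just t A, w) ∈ E) ∧
  (∀ (t : Term) (A : Formula) (w v : W),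
      (t, A, w) ∈ E → R w v → (t, A, v) ∈ E)

/-- `M` is a Fitting model for `J_CS`. -/
def IsModelJ (CS : Set Formula) (M : Model) : Prop :=
  AdmissibleBang CS (EvSet M)

/-- `M` is a Fitting model for `JT_CS`: additionally `R` is reflexive. -/
def IsModelJT (CS : Set Formula) (M : Model) : Prop :=
  Reflexive M.R ∧ AdmissibleBang CS (EvSet M)

/-- `M` is a Fitting model for `JD_CS`: additionally `R` is serial. -/
def IsModelJD (CS : Set Formula) (M : Model) : Prop :=
  Serial M.R ∧ AdmissibleBang CS (EvSet M)

/-- `M` is a Fitting model for `J4_CS`: `R` is transitive. -/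
def IsModelJ4 (CS : Set Formula) (M : Model) : Prop :=
  Transitive M.R ∧ AdmissibleJ4 CS M.R (EvSet M)

/-- `M` is a Fitting model for `JD4_CS`: `R` is serial and transitive. -/
def IsModelJD4 (CS : Set Formula) (M : Model) : Prop :=
  Serial M.R ∧ Transitive M.R ∧ AdmissibleJ4 CS M.R (EvSet M)

/-- `M` is a Fitting model for `LP_CS`: `R` is reflexive and transitive. -/
def IsModelLP (CS : Set Formula) (M : Model) : Prop :=
  Reflexive M.R ∧ Transitive M.R ∧ AdmissibleJ4 CS M.R (EvSet M)

/-- `B` is a base for the evidence relation of `M`, and that evidence relation is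
minimal (least) among the admissible ones (non-(j4) version) containing `B`. -/
def MinBaseBang (CS : Set Formula) (M : Model)
    (B : Set (Term × Formula × M.World)) : Prop :=
  B ⊆ EvSet M ∧
  ∀ E' : Set (Term × Formula × M.World),
    AdmissibleBang CS E' → B ⊆ E' → EvSet M ⊆ E'

/-- `B` is a base for the evidence relation of `M`, and that evidence relation is
minimal (least) among the admissible ones ((j4) version) containing `B`. -/
def MinBaseJ4 (CS : Set Formula) (M : Model)
    (B : Set (Term × Formula × M.World)) : Prop :=
  B ⊆ EvSet M ∧
  ∀ E' : Set (Term × Formula × M.World),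
    AdmissibleJ4 CS M.R E' → B ⊆ E' → EvSet M ⊆ E'

/-- `M` is finitary (non-(j4) version): finitely many worlds, the evidence relation
is the minimal admissible one over some finite base, and the valuation has finite graph. -/
def FinitaryBang (CS : Set Formula) (M : Model) : Prop :=
  Finite M.World ∧
  (∃ B : Set (Term × Formula × M.World), B.Finite ∧ MinBaseBang CS M B) ∧
  (ValSet M).Finite

/-- `M` is finitary ((j4) version): finitely many worlds, the evidence relation
is the minimal admissible one over some finite base, and the valuation has finite graph. -/
def FinitaryJ4 (CS : Set Formula) (M : Model) : Prop :=
  Finite M.World ∧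
  (∃ B : Set (Term × Formula × M.World), B.Finite ∧ MinBaseJ4 CS M B) ∧
  (ValSet M).Finite

section Completeness

open Formula

/-- Derivability from a set of assumptions. -/
inductive Dv (CS : Set Formula) (Γ : Set Formula) : Formula → Prop
  | base {A : Formula} : DerivB AxJD CS A → Dv CS Γ A
  | mem {A : Formula} : A ∈ Γ → Dv CS Γ A
  | mp {A B : Formula} : Dv CS Γ (A.impl B) → Dv CS Γ A → Dv CS Γ B

variable {CS : Set Formula}

lemma deriv_id (A : Formula) : DerivB AxJD CS (A.impl A) :=
  ((DerivB.ax (Ax.s A (A.impl A) A)).mp (DerivB.ax (Ax.k A (A.impl A)))).mp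
    (DerivB.ax (Ax.k A A))

lemma Dv.mono {Γ Δ : Set Formula} (h : Γ ⊆ Δ) {A : Formula} (hd : Dv CS Γ A) :
    Dv CS Δ A := by
  induction hd with
  | base h' => exact Dv.base h'
  | mem h' => exact Dv.mem (h h')
  | mp _ _ ih1 ih2 => exact ih1.mp ih2

lemma Dv.ded {Γ : Set Formula} {A B : Formula} (h : Dv CS (insert A Γ) B) :
    Dv CS Γ (A.impl B) := by
  induction h with
  | base h' => exact (Dv.base (DerivB.ax (Ax.k _ A))).mp (Dv.base h')
  | @mem B h' =>
    rcases h' with h' | h'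
    · subst h'; exact Dv.base (deriv_id _)
    · exact (Dv.base (DerivB.ax (Ax.k B A))).mp (Dv.mem h')
  | mp _ _ ih1 ih2 =>
    exact ((Dv.base (DerivB.ax (Ax.s A _ _))).mp ih1).mp ih2

lemma dv_empty {A : Formula} (h : Dv CS ∅ A) : DerivB AxJD CS A := by
  induction h with
  | base h' => exact h'
  | mem h' => exact absurd h' (Set.notMem_empty _)
  | mp _ _ ih1 ih2 => exact ih1.mp ih2

lemma Dv.explode {Γ : Set Formula} {A B : Formula} (hn : Dv CS Γ (Formula.neg A))
    (ha : Dv CS Γ A) : Dv CS Γ B :=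
  ((Dv.base (DerivB.ax (Ax.dn B A))).mp
    ((Dv.base (DerivB.ax (Ax.k (Formula.neg A) (Formula.neg B)))).mp hn)).mp ha

lemma Dv.of_neg_imp_falsum {Γ : Set Formula} {B : Formula}
    (h : Dv CS Γ ((Formula.neg B).impl Formula.falsum)) : Dv CS Γ B :=
  ((Dv.base (DerivB.ax (Ax.dn B ((Formula.atom 0).impl (Formula.atom 0))))).mp h).mp
    (Dv.base (deriv_id _))

/-- Consistency. -/
def Con (CS Γ : Set Formula) : Prop := ¬ Dv CS Γ Formula.falsum

/-- Maximal consistent sets. -/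
def MCS (CS Γ : Set Formula) : Prop :=
  Con CS Γ ∧ ∀ B : Formula, B ∈ Γ ∨ Formula.neg B ∈ Γ

lemma MCS.closed {Γ : Set Formula} (h : MCS CS Γ) {B : Formula}
    (hd : Dv CS Γ B) : B ∈ Γ := by
  rcases h.2 B with hB | hB
  · exact hB
  · exact absurd (Dv.explode (Dv.mem hB) hd) h.1

lemma MCS.neg_mem_iff {Γ : Set Formula} (h : MCS CS Γ) {B : Formula} :
    Formula.neg B ∈ Γ ↔ B ∉ Γ := by
  constructor
  · intro hn hB
    exact h.1 (Dv.explode (Dv.mem hn) (Dv.mem hB))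
  · intro hB
    exact (h.2 B).resolve_left hB

lemma MCS.impl_mem_iff {Γ : Set Formula} (h : MCS CS Γ) {A B : Formula} :
    A.impl B ∈ Γ ↔ (A ∈ Γ → B ∈ Γ) := by
  constructor
  · intro hAB hA
    exact h.closed ((Dv.mem hAB).mp (Dv.mem hA))
  · intro hcl
    by_cases hA : A ∈ Γ
    · exact h.closed ((Dv.base (DerivB.ax (Ax.k B A))).mp (Dv.mem (hcl hA)))
    · have hnA : Formula.neg A ∈ Γ := h.neg_mem_iff.mpr hA
      exact h.closed (Dv.ded (Dv.explode (Dv.mem (Set.mem_insert_of_mem _ hnA))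
        (Dv.mem (Set.mem_insert _ _))))

lemma Dv.finite {Γ : Set Formula} {A : Formula} (h : Dv CS Γ A) :
    ∃ F : Set Formula, F ⊆ Γ ∧ F.Finite ∧ Dv CS F A := by
  induction h with
  | base h' => exact ⟨∅, Set.empty_subset _, Set.finite_empty, Dv.base h'⟩
  | @mem B h' => exact ⟨{B}, Set.singleton_subset_iff.mpr h', Set.finite_singleton _,
      Dv.mem rfl⟩
  | mp _ _ ih1 ih2 =>
    obtain ⟨F1, hF1, hf1, hd1⟩ := ih1
    obtain ⟨F2, hF2, hf2, hd2⟩ := ih2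
    exact ⟨F1 ∪ F2, Set.union_subset hF1 hF2, hf1.union hf2,
      (hd1.mono Set.subset_union_left).mp (hd2.mono Set.subset_union_right)⟩

lemma finite_subset_chain {c : Set (Set Formula)} (hc : IsChain (· ⊆ ·) c)
    (hne : c.Nonempty) {F : Set Formula} (hF : F.Finite) (hsub : F ⊆ ⋃₀ c) :
    ∃ s ∈ c, F ⊆ s := by
  induction F, hF using Set.Finite.induction_on with
  | empty => exact ⟨hne.choose, hne.choose_spec, Set.empty_subset _⟩
  | @insert a s _ _ ih =>
    obtain ⟨s1, hs1, hFs1⟩ := ih (fun x hx => hsub (Set.mem_insert_of_mem _ hx))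
    obtain ⟨t, htc, hat⟩ := hsub (Set.mem_insert _ _)
    rcases eq_or_ne s1 t with rfl | hne'
    · exact ⟨s1, hs1, Set.insert_subset hat hFs1⟩
    rcases hc hs1 htc hne' with hle | hle
    · exact ⟨t, htc, Set.insert_subset hat (hFs1.trans hle)⟩
    · exact ⟨s1, hs1, Set.insert_subset (hle hat) hFs1⟩

lemma lindenbaum {Γ : Set Formula} (h : Con CS Γ) :
    ∃ Δ : Set Formula, Γ ⊆ Δ ∧ MCS CS Δ := by
  obtain ⟨m, hΓm, hm⟩ := zorn_subset_nonempty {Δ : Set Formula | Con CS Δ}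
    (fun c hcS hc hcne => by
      refine ⟨⋃₀ c, ?_, fun s hs => Set.subset_sUnion_of_mem hs⟩
      intro hbot
      obtain ⟨F, hFsub, hFfin, hFd⟩ := hbot.finite
      obtain ⟨s, hsc, hFs⟩ := finite_subset_chain hc hcne hFfin hFsub
      exact hcS hsc (hFd.mono hFs)) Γ h
  refine ⟨m, hΓm, hm.1, fun B => ?_⟩
  by_contra hcon
  push_neg at hcon
  obtain ⟨hB, hnB⟩ := hcon
  have h1 : ¬ Con CS (insert B m) := fun hc =>
    hB (hm.2 hc (Set.subset_insert _ _) (Set.mem_insert _ _))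
  have h2 : ¬ Con CS (insert (Formula.neg B) m) := fun hc =>
    hnB (hm.2 hc (Set.subset_insert _ _) (Set.mem_insert _ _))
  have d1 : Dv CS m (B.impl Formula.falsum) := Dv.ded (not_not.mp h1)
  have d2 : Dv CS m ((Formula.neg B).impl Formula.falsum) := Dv.ded (not_not.mp h2)
  exact hm.1 (d1.mp d2.of_neg_imp_falsum)

lemma internalize (hApp : AxApprop AxJD CS) {A : Formula}
    (h : DerivB AxJD CS A) : ∃ t : Term, DerivB AxJD CS (Formula.just t A) := by
  induction h with
  | @ax A hA =>
    obtain ⟨c, hc⟩ := hApp A hA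
    exact ⟨Term.const c, DerivB.an c A 0 hc⟩
  | @mp A B _ _ ih1 ih2 =>
    obtain ⟨t, ht⟩ := ih1
    obtain ⟨s, hs⟩ := ih2
    exact ⟨Term.app t s, ((DerivB.ax (Ax.a2 t s A B)).mp ht).mp hs⟩
  | an c A n hc => exact ⟨towerT (Term.const c) (n + 1), DerivB.an c A (n + 1) hc⟩

lemma succ_consistent (hApp : AxApprop AxJD CS) {Γ : Set Formula} (hΓ : MCS CS Γ) :
    Con CS {B : Formula | ∃ t : Term, Formula.just t B ∈ Γ} := by
  intro hbot
  obtain ⟨F, hFsub, hFfin, hFd⟩ := hbot.finite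
  have key : ∀ F : Set Formula, F.Finite →
      F ⊆ {B : Formula | ∃ t : Term, Formula.just t B ∈ Γ} →
      ∀ X : Formula, Dv CS F X → ∃ u : Term, Dv CS Γ (Formula.just u X) := by
    intro F hFfin
    induction F, hFfin using Set.Finite.induction_on with
    | empty =>
      intro _ X hX
      obtain ⟨u, hu⟩ := internalize hApp (dv_empty hX)
      exact ⟨u, Dv.base hu⟩
    | @insert a s _ _ ih =>
      intro hsub X hX
      obtain ⟨t, hta⟩ := hsub (Set.mem_insert _ _)
      obtain ⟨u, hu⟩ := ih (fun x hx => hsub (Set.mem_insert_of_mem _ hx))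
        (a.impl X) (Dv.ded hX)
      exact ⟨Term.app u t, ((Dv.base (DerivB.ax (Ax.a2 u t a X))).mp hu).mp
        (Dv.mem hta)⟩
  obtain ⟨u, hu⟩ := key F hFfin hFsub Formula.falsum hFd
  exact hΓ.1 ((Dv.base (DerivB.ax (Ax.jd u rfl))).mp hu)

/-- The canonical model. -/
def canModel (CS : Set Formula) (h : ∃ Γ : Set Formula, MCS CS Γ) : Model where
  World := {Γ : Set Formula // MCS CS Γ}
  nonempty := ⟨⟨h.choose, h.choose_spec⟩⟩
  R := fun Γ Δ => ∀ (t : Term) (B : Formula), Formula.just t B ∈ Γ.1 → B ∈ Δ.1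
  E := fun t B Γ => Formula.just t B ∈ Γ.1
  val := fun n Γ => Formula.atom n ∈ Γ.1

lemma truth (h : ∃ Γ : Set Formula, MCS CS Γ) (B : Formula) :
    ∀ Γ : (canModel CS h).World, Sat (canModel CS h) B Γ ↔ B ∈ Γ.1 := by
  induction B with
  | atom n => exact fun Γ => Iff.rfl
  | neg A ih =>
    intro Γ
    simp only [Sat, ih Γ]
    exact (Γ.2.neg_mem_iff).symm
  | impl A B ih1 ih2 =>
    intro Γ
    simp only [Sat, ih1 Γ, ih2 Γ]
    exact (Γ.2.impl_mem_iff).symm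
  | just t A ih =>
    intro Γ
    constructor
    · rintro ⟨hE, -⟩
      exact hE
    · intro hmem
      exact ⟨hmem, fun Δ hR => (ih Δ).mpr (hR t A hmem)⟩

end Completeness

/-- Completeness of `JD_CS`: if a formula is not derivable in the Hilbert system
`JD_CS` (with axiomatically appropriate constant specification `CS`), then it fails at some world
of some Fitting model for `JD_CS`. -/
theorem completeness_JD (CS : Set Formula) (hCS : ConstSpec AxJD CS) (hApp : AxApprop AxJD CS) (A : Formula)
    (hA : ¬ DerivB AxJD CS A) :
    ∃ M : Model, IsModelJD CS M ∧ ∃ w : M.World, ¬ Sat M A w := by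
  have hcon : Con CS (insert (Formula.neg A) ∅) := by
    intro hbot
    exact hA (dv_empty (Dv.ded hbot).of_neg_imp_falsum)
  obtain ⟨Γ0, hΓ0sub, hΓ0⟩ := lindenbaum hcon
  have hex : ∃ Γ : Set Formula, MCS CS Γ := ⟨Γ0, hΓ0⟩
  refine ⟨canModel CS hex, ⟨?_, ?_, ?_, ?_⟩, ⟨Γ0, hΓ0⟩, ?_⟩
  · -- Serial
    intro Γ
    obtain ⟨Δ, hΔsub, hΔ⟩ := lindenbaum (succ_consistent hApp Γ.2)
    exact ⟨⟨Δ, hΔ⟩, fun t B hB => hΔsub ⟨t, hB⟩⟩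
  · -- sum
    rintro s t B w (h | h)
    · refine w.2.closed ((Dv.base (DerivB.ax (Ax.a3 s t B))).mp ?_)
      exact Dv.ded (Dv.explode (Dv.mem (Set.mem_insert _ _))
        (Dv.mem (Set.mem_insert_of_mem _ h)))
    · refine w.2.closed ((Dv.base (DerivB.ax (Ax.a3 s t B))).mp ?_)
      exact (Dv.base (DerivB.ax
        (Ax.k (Formula.just t B) (Formula.neg (Formula.just s B))))).mp (Dv.mem h)
  · -- app
    intro s t B C w h1 h2
    exact w.2.closed (((Dv.base (DerivB.ax (Ax.a2 s t B C))).mp (Dv.mem h1)).mp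
      (Dv.mem h2))
  · -- constants
    intro c B w n hc
    exact w.2.closed (Dv.base (DerivB.an c B n hc))
  · -- A fails at the root
    rw [truth hex A ⟨Γ0, hΓ0⟩]
    exact hΓ0.neg_mem_iff.mp (hΓ0sub (Set.mem_insert _ _))

end JustificationLogic
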